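/- Let θ ≥ 1, set α = 1/θ, and let ψ(t) = exp(−t^α) for t ≥ 0 be the Gumbel generator. Then for every d ≥ 1 and every t > 0, the d-th derivative of ψ satisfies (−1)^d ψ^{(d)}(t) = (exp(−t^α) / t^d) · ∑_{k=1}^d a^G_{dk}(α) t^{αk}, where a^G_{dk}(α) = (1/k!) ∑_{j=1}^k binom(k,j) (−1)^{d−j} (αj)_d and (x)_d = x(x−1)⋯(x−d+1) is the falling factorial with d factors. -/

import Mathlib

open Polynomial Finset

lemma fd_vanish : ∀ (k : ℕ) (P : ℝ[X]), P.natDegree < k →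
    (fwdDiff (1:ℝ))^[k] (fun x : ℝ => P.eval x) = fun _ => 0 := by
  intro k
  induction k with
  | zero => intro P h; omega
  | succ k IH =>
    intro P h
    rw [Function.iterate_succ_apply]
    have hQ : fwdDiff (1:ℝ) (fun x : ℝ => P.eval x)
        = fun x : ℝ => (P.comp (X + C 1) - P).eval x := by
      funext x
      simp [fwdDiff, eval_comp]
    rcases Nat.eq_zero_or_pos P.natDegree with h0 | h0
    · have hP : P = C (P.coeff 0) := eq_C_of_natDegree_eq_zero h0
      have hQ0 : fwdDiff (1:ℝ) (fun x : ℝ => P.eval x) = fun _ => (0:ℝ) := by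
        rw [hQ]
        funext x
        rw [hP]
        simp
      rw [hQ0]
      exact Function.iterate_fixed (by funext x; simp [fwdDiff]) k
    · have hPne : P ≠ 0 := fun hh => by simp [hh] at h0
      have hlc : (P.comp (X + C 1)).leadingCoeff = P.leadingCoeff := by
        rw [leadingCoeff_comp (by rw [natDegree_X_add_C]; norm_num),
          (monic_X_add_C (1:ℝ)).leadingCoeff, one_pow, mul_one]
      have hcompne : P.comp (X + C 1) ≠ 0 := by
        intro hh
        apply hPne
        rw [← leadingCoeff_eq_zero, ← hlc, hh, leadingCoeff_zero]
      have hdeq : (P.comp (X + C 1)).degree = P.degree := by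
        rw [degree_eq_natDegree hcompne, degree_eq_natDegree hPne, natDegree_comp,
          natDegree_X_add_C, mul_one]
      have hlt : (P.comp (X + C 1) - P).degree < P.degree := by
        have := degree_sub_lt hdeq hcompne hlc
        rwa [hdeq] at this
      have hnd : (P.comp (X + C 1) - P).natDegree < k := by
        rcases eq_or_ne (P.comp (X + C 1) - P) 0 with hz | hz
        · rw [hz]; simpa using by omega
        · have h1 : (P.comp (X + C 1) - P).natDegree < P.natDegree :=
            natDegree_lt_natDegree hz hlt
          omega
      rw [hQ]
      exact IH _ hnd

lemma sum_vanish (k : ℕ) (P : ℝ[X]) (h : P.natDegree < k) (h0 : P.eval 0 = 0) :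
    ∑ j ∈ Finset.Icc 1 k, (-1:ℝ)^j * (k.choose j : ℝ) * P.eval (j : ℝ) = 0 := by
  have H := fwdDiff_iter_eq_sum_shift (1:ℝ) (fun x : ℝ => P.eval x) k 0
  rw [fd_vanish k P h] at H
  simp only [zsmul_eq_mul, nsmul_eq_mul, mul_one, zero_add, Int.cast_mul, Int.cast_pow,
    Int.cast_neg, Int.cast_one, Int.cast_natCast] at H
  have hsplit : range (k+1) = insert 0 (Finset.Icc 1 k) := by
    ext x; simp [Finset.mem_range, Finset.mem_Icc]; omega
  rw [hsplit, Finset.sum_insert (by simp)] at H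
  simp only [h0, Nat.cast_zero, mul_zero, zero_add] at H
  have key : ∀ j ∈ Finset.Icc 1 k, (-1:ℝ)^j * (k.choose j : ℝ) * P.eval (j:ℝ)
      = (-1:ℝ)^k * ((-1:ℝ)^(k-j) * (k.choose j : ℝ) * P.eval (j:ℝ)) := by
    intro j hj
    have hjk : j ≤ k := (Finset.mem_Icc.mp hj).2
    have : (-1:ℝ)^k = (-1:ℝ)^(k-j) * (-1:ℝ)^j := by
      rw [← pow_add, Nat.sub_add_cancel hjk]
    have h2 : (-1:ℝ)^(k-j) * (-1:ℝ)^(k-j) = 1 := by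
      rw [← pow_add]; exact Even.neg_one_pow ⟨k-j, rfl⟩
    calc (-1:ℝ)^j * (k.choose j : ℝ) * P.eval (j:ℝ)
        = ((-1:ℝ)^(k-j) * (-1:ℝ)^(k-j)) * ((-1:ℝ)^j * (k.choose j : ℝ) * P.eval (j:ℝ)) := by
          rw [h2, one_mul]
      _ = (-1:ℝ)^k * ((-1:ℝ)^(k-j) * (k.choose j : ℝ) * P.eval (j:ℝ)) := by rw [this]; ring
  rw [Finset.sum_congr rfl key, ← Finset.mul_sum, ← H, mul_zero]


noncomputable def Acoef (α : ℝ) (d k : ℕ) : ℝ :=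
  (1 / (Nat.factorial k : ℝ)) * ∑ j ∈ Finset.Icc 1 k,
    (Nat.choose k j : ℝ) * (-1:ℝ)^(d+j) * (descPochhammer ℝ d).eval (α * j)


lemma Acoef_zero (α : ℝ) (d : ℕ) : Acoef α d 0 = 0 := by
  simp [Acoef]

lemma Acoef_vanish (α : ℝ) (d k : ℕ) (hd : 1 ≤ d) (hk : d < k) : Acoef α d k = 0 := by
  set P : ℝ[X] := (descPochhammer ℝ d).comp (C α * X) with hP
  have hev : ∀ x : ℝ, P.eval x = (descPochhammer ℝ d).eval (α * x) := by
    intro x; simp [hP, eval_comp]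
  have hdeg : P.natDegree < k := by
    calc P.natDegree ≤ (descPochhammer ℝ d).natDegree * (C α * X).natDegree :=
          natDegree_comp_le
      _ ≤ d * 1 := by
          apply Nat.mul_le_mul
          · rw [descPochhammer_natDegree]
          · exact le_trans (natDegree_C_mul_le α X) (by simp)
      _ < k := by omega
  have h0 : P.eval 0 = 0 := by
    rw [hev, mul_zero, descPochhammer_eval_zero, if_neg (by omega)]
  have H := sum_vanish k P hdeg h0
  have key : ∀ j ∈ Finset.Icc 1 k,
      (Nat.choose k j : ℝ) * (-1:ℝ)^(d+j) * (descPochhammer ℝ d).eval (α * j)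
      = (-1:ℝ)^d * ((-1:ℝ)^j * (k.choose j : ℝ) * P.eval (j : ℝ)) := by
    intro j _
    rw [hev, pow_add]
    ring
  rw [Acoef, Finset.sum_congr rfl key, ← Finset.mul_sum, H, mul_zero, mul_zero]

lemma Acoef_rec (α : ℝ) (d k : ℕ) (hk : 1 ≤ k) :
    Acoef α (d+1) k = α * Acoef α d (k-1) + ((d : ℝ) - α * k) * Acoef α d k := by
  obtain ⟨m, rfl⟩ : ∃ m, k = m + 1 := ⟨k-1, by omega⟩
  have hm1 : m + 1 - 1 = m := by omega
  rw [hm1]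
  unfold Acoef
  -- extend the middle sum (over Icc 1 m) to Icc 1 (m+1)
  have hext : ∑ j ∈ Finset.Icc 1 m,
        (Nat.choose m j : ℝ) * (-1:ℝ)^(d+j) * (descPochhammer ℝ d).eval (α * j)
      = ∑ j ∈ Finset.Icc 1 (m+1),
        (Nat.choose m j : ℝ) * (-1:ℝ)^(d+j) * (descPochhammer ℝ d).eval (α * j) := by
    rw [Finset.sum_Icc_succ_top (by omega), Nat.choose_succ_self]
    simp
  rw [hext, Finset.mul_sum, Finset.mul_sum, Finset.mul_sum, Finset.mul_sum, Finset.mul_sum,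
    ← Finset.sum_add_distrib]
  apply Finset.sum_congr rfl
  intro j hj
  have hjm : j ≤ m + 1 := (Finset.mem_Icc.mp hj).2
  have hcast : ((m + 1 - j : ℕ) : ℝ) = (m : ℝ) + 1 - j := by
    push_cast [Nat.cast_sub hjm]; ring
  have hch : ((m.choose j : ℝ)) * ((m : ℝ) + 1) = ((m+1).choose j : ℝ) * ((m:ℝ) + 1 - j) := by
    have := Nat.choose_mul_succ_eq m j
    have h2 : ((m.choose j * (m + 1) : ℕ) : ℝ) = (((m + 1).choose j * (m + 1 - j) : ℕ) : ℝ) := by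
      exact_mod_cast congrArg (Nat.cast : ℕ → ℝ) this
    push_cast [hcast] at h2
    exact h2
  have hfac : ((m+1).factorial : ℝ) = ((m:ℝ)+1) * (m.factorial : ℝ) := by
    rw [Nat.factorial_succ]; push_cast; ring
  have hfacne : (m.factorial : ℝ) ≠ 0 := Nat.cast_ne_zero.mpr (Nat.factorial_ne_zero m)
  have hfacne1 : ((m+1).factorial : ℝ) ≠ 0 := Nat.cast_ne_zero.mpr (Nat.factorial_ne_zero (m+1))
  have hpoch : (descPochhammer ℝ (d+1)).eval (α * j)
      = (descPochhammer ℝ d).eval (α * j) * (α * j - d) := descPochhammer_succ_eval d _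
  have hpow : (-1:ℝ)^(d+1+j) = -((-1:ℝ)^(d+j)) := by
    rw [show d+1+j = (d+j)+1 by omega, pow_succ]
    ring
  rw [hpoch, hpow, hfac]
  push_cast
  field_simp
  linear_combination (-((descPochhammer ℝ d).eval (α * (j:ℝ)) * α)) * hch

lemma gumbel_main (α : ℝ) : ∀ d : ℕ, 1 ≤ d → ∀ t : ℝ, 0 < t →
    iteratedDeriv d (fun s : ℝ => Real.exp (-(s ^ α))) t
      = Real.exp (-(t ^ α)) * ∑ k ∈ Finset.Icc 1 d,
          ((-1:ℝ)^d * Acoef α d k) * t ^ (α * k - (d : ℝ)) := by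
  intro d
  induction d with
  | zero => omega
  | succ d IH =>
    intro _ t ht
    have hder : ∀ u : ℝ, 0 < u → HasDerivAt (fun s : ℝ => Real.exp (-(s ^ α)))
        (Real.exp (-(u^α)) * -(α * u ^ (α - 1))) u := fun u hu =>
      ((Real.hasDerivAt_rpow_const (Or.inl hu.ne')).neg).exp
    rcases Nat.eq_zero_or_pos d with rfl | hd
    · -- base case : d + 1 = 1
      rw [iteratedDeriv_one, (hder t ht).deriv]
      have hA : Acoef α 1 1 = α := by
        simp [Acoef, descPochhammer_one]
      rw [Finset.Icc_self, Finset.sum_singleton, hA]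
      push_cast
      ring_nf
    · -- inductive step
      rw [iteratedDeriv_succ]
      have hev : iteratedDeriv d (fun s : ℝ => Real.exp (-(s ^ α)))
          =ᶠ[nhds t] (fun s : ℝ => Real.exp (-(s ^ α)) * ∑ k ∈ Finset.Icc 1 d,
            ((-1:ℝ)^d * Acoef α d k) * s ^ (α * k - (d : ℝ))) :=
        Filter.eventuallyEq_of_mem (Ioi_mem_nhds ht) (fun s hs => IH hd s hs)
      rw [Filter.EventuallyEq.deriv_eq hev]
      have hS : HasDerivAt (fun s : ℝ => ∑ k ∈ Finset.Icc 1 d,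
            ((-1:ℝ)^d * Acoef α d k) * s ^ (α * k - (d : ℝ)))
          (∑ k ∈ Finset.Icc 1 d, ((-1:ℝ)^d * Acoef α d k) *
            ((α * k - (d:ℝ)) * t ^ (α * k - (d:ℝ) - 1))) t :=
        HasDerivAt.fun_sum fun k _ =>
          (Real.hasDerivAt_rpow_const (Or.inl ht.ne')).const_mul _
      rw [((hder t ht).fun_mul hS).deriv]
      -- now pure algebra with sums
      set E := Real.exp (-(t ^ α)) with hE
      -- define G and H
      set c : ℕ → ℝ := fun k => (-1:ℝ)^d * Acoef α d k with hc
      have step1 : ∀ k ∈ Finset.Icc 1 (d+1),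
          ((-1:ℝ)^(d+1) * Acoef α (d+1) k) * t ^ (α * k - ((d:ℝ)+1))
          = (-α * c (k-1)) * t ^ (α * k - ((d:ℝ)+1))
            + ((α * k - (d:ℝ)) * c k) * t ^ (α * k - ((d:ℝ)+1)) := by
        intro k hk
        have h1 : 1 ≤ k := (Finset.mem_Icc.mp hk).1
        rw [Acoef_rec α d k h1, hc]
        simp only []
        rw [pow_succ]
        ring
      -- sums
      have hGzero : (-α * c (1-1)) * t ^ (α * ((1:ℕ):ℝ) - ((d:ℝ)+1)) = 0 := by
        simp [hc, Acoef_zero]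
      have hHtop : ((α * (d+1:ℕ) - (d:ℝ)) * c (d+1)) * t ^ (α * (d+1:ℕ) - ((d:ℝ)+1)) = 0 := by
        rw [hc]
        simp only []
        rw [Acoef_vanish α d (d+1) hd (by omega)]
        ring
      push_cast
      have key : ∑ k ∈ Finset.Icc 1 (d+1), ((-1:ℝ)^(d+1) * Acoef α (d+1) k) * t ^ (α * k - ((d:ℝ)+1))
          = (∑ k ∈ Finset.Icc 1 d, (-α * c k) * t ^ (α * ((k+1:ℕ):ℝ) - ((d:ℝ)+1)))
            + ∑ k ∈ Finset.Icc 1 d, ((α * k - (d:ℝ)) * c k) * t ^ (α * k - ((d:ℝ)+1)) := by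
        rw [Finset.sum_congr rfl step1, Finset.sum_add_distrib]
        congr 1
        · have e1 : Finset.Icc 1 (d+1) = insert 1 (Finset.Icc 2 (d+1)) := by
            ext x; simp only [Finset.mem_Icc, Finset.mem_insert]; omega
          rw [e1, Finset.sum_insert (by simp)]
          rw [hGzero, zero_add, ← map_add_right_Icc 1 d 1, Finset.sum_map]
          apply Finset.sum_congr rfl
          intro k hk
          simp only [addRightEmbedding_apply]
          norm_num
        · rw [Finset.sum_Icc_succ_top (by omega), hHtop, add_zero]
      rw [key, mul_add, Finset.mul_sum, Finset.mul_sum, Finset.mul_sum, Finset.mul_sum]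
      congr 1
      · apply Finset.sum_congr rfl
        intro k hk
        rw [show α * (((k+1:ℕ)):ℝ) - ((d:ℝ)+1) = (α - 1) + (α * k - (d:ℝ)) by push_cast; ring,
          Real.rpow_add ht]
        ring
      · apply Finset.sum_congr rfl
        intro k hk
        rw [show α * (k:ℝ) - ((d:ℝ)+1) = α * k - (d:ℝ) - 1 by ring]
        ring

/-- Explicit formula for the derivatives of the Gumbel generator
`ψ(t) = exp(−t^α)`, `α = 1/θ`:
`(−1)^d ψ^{(d)}(t) = (exp(−t^α)/t^d) ∑_{k=1}^d a^G_{dk}(α) t^{αk}` where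
`a^G_{dk}(α) = (1/k!) ∑_{j=1}^k C(k,j) (−1)^{d−j} (αj)_d`. -/
theorem stmt_10 (θ : ℝ) (hθ : 1 ≤ θ) (d : ℕ) (hd : 1 ≤ d) (t : ℝ) (ht : 0 < t) :
    (-1 : ℝ) ^ d * iteratedDeriv d (fun s => Real.exp (-(s ^ (1/θ)))) t
    = Real.exp (-(t ^ (1/θ))) / t ^ d *
        ∑ k ∈ Finset.Icc 1 d,
          ((1 / (Nat.factorial k : ℝ)) *
            ∑ j ∈ Finset.Icc 1 k, (Nat.choose k j : ℝ) * (-1 : ℝ) ^ (d - j) *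
              (descPochhammer ℝ d).eval ((1/θ) * j)) * t ^ ((1/θ) * k) := by
  rw [gumbel_main (1/θ) d hd t ht]
  have hstmt : ∀ k ∈ Finset.Icc 1 d,
      ((1 / (Nat.factorial k : ℝ)) *
        ∑ j ∈ Finset.Icc 1 k, (Nat.choose k j : ℝ) * (-1 : ℝ) ^ (d - j) *
          (descPochhammer ℝ d).eval ((1/θ) * j)) * t ^ ((1/θ) * k)
      = Acoef (1/θ) d k * t ^ ((1/θ) * k) := by
    intro k hk
    have hkd : k ≤ d := (Finset.mem_Icc.mp hk).2
    congr 1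
    rw [Acoef]
    congr 1
    apply Finset.sum_congr rfl
    intro j hj
    have hjd : j ≤ d := le_trans (Finset.mem_Icc.mp hj).2 hkd
    have hpow : (-1:ℝ) ^ (d + j) = (-1:ℝ) ^ (d - j) := by
      rw [show d + j = (d - j) + 2 * j by omega, pow_add, pow_mul, neg_one_sq, one_pow, mul_one]
    rw [hpow]
  rw [Finset.sum_congr rfl hstmt, Finset.mul_sum, Finset.mul_sum, Finset.mul_sum]
  apply Finset.sum_congr rfl
  intro k hk
  rw [Real.rpow_sub ht, Real.rpow_natCast]
  have h2 : (-1:ℝ)^d * (-1:ℝ)^d = 1 := by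
    rw [← pow_add]; exact Even.neg_one_pow ⟨d, rfl⟩
  linear_combination (Real.exp (-(t ^ (1/θ))) * Acoef (1/θ) d k * t ^ ((1/θ) * (k:ℝ)) / t ^ d) * h2
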